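/- arXiv:1610.02243 — 3 statements merged into one kernel-verified Lean document; each statement's English description precedes it below -/
import Mathlib

section
/- Let ζ ∈ ℂ be a primitive 9-th root of unity and let q_0 := (ζ⁶, ζ⁸, ζ⁶). Then the characteristic sequence (c_i)_{i∈ℤ} of q_0 is well defined (q_0 is not broken) and is periodic with period 3, with c_{−1} = 2, c_0 = 2, c_1 = 5, and c_{i+3} = c_i for all i ∈ ℤ. -/
/-- The defining set for `m₁` of a triple `(q₁, q, q₂)`. -/
def m1Set (t : ℂ × ℂ × ℂ) : Set ℕ :=
  {m | (∑ k ∈ Finset.range (m + 1), t.1 ^ k) = 0 ∨ t.1 ^ m * t.2.1 = 1}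

/-- The defining set for `m₂` of a triple `(q₁, q, q₂)`. -/
def m2Set (t : ℂ × ℂ × ℂ) : Set ℕ :=
  {m | (∑ k ∈ Finset.range (m + 1), t.2.2 ^ k) = 0 ∨ t.2.2 ^ m * t.2.1 = 1}

/-- `m₁(q)` is defined. -/
def M1Defined (t : ℂ × ℂ × ℂ) : Prop := (m1Set t).Nonempty

/-- `m₂(q)` is defined. -/
def M2Defined (t : ℂ × ℂ × ℂ) : Prop := (m2Set t).Nonempty

/-- `m₁(q)`, the minimum of the defining set (junk value `0` if undefined). -/
noncomputable def m1 (t : ℂ × ℂ × ℂ) : ℕ := sInf (m1Set t)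

/-- `m₂(q)`, the minimum of the defining set (junk value `0` if undefined). -/
noncomputable def m2 (t : ℂ × ℂ × ℂ) : ℕ := sInf (m2Set t)

/-- The reflection `σ₁(q₁, q, q₂) = (q₁, q₁^{-2m₁} q⁻¹, q₁^{m₁²} q^{m₁} q₂)`. -/
noncomputable def sigma1 (t : ℂ × ℂ × ℂ) : ℂ × ℂ × ℂ :=
  (t.1, (t.1 ^ (2 * m1 t))⁻¹ * t.2.1⁻¹, t.1 ^ (m1 t ^ 2) * t.2.1 ^ m1 t * t.2.2)

/-- The reflection `σ₂(q₁, q, q₂) = (q₁ q^{m₂} q₂^{m₂²}, q₂^{-2m₂} q⁻¹, q₂)`. -/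
noncomputable def sigma2 (t : ℂ × ℂ × ℂ) : ℂ × ℂ × ℂ :=
  (t.1 * t.2.1 ^ m2 t * t.2.2 ^ (m2 t ^ 2), (t.2.2 ^ (2 * m2 t))⁻¹ * t.2.1⁻¹, t.2.2)

/-- An unbroken bi-infinite sequence of triples `(qᵢ)` with `qᵢ₊₁ = σ₁(qᵢ)` for
even `i` and `qᵢ₊₁ = σ₂(qᵢ)` for odd `i`, all required `m`-values being defined. -/
def IsQChain (Q : ℤ → ℂ × ℂ × ℂ) : Prop :=
  ∀ i : ℤ, (Even i → M1Defined (Q i) ∧ Q (i + 1) = sigma1 (Q i)) ∧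
    (¬ Even i → M2Defined (Q i) ∧ Q (i + 1) = sigma2 (Q i))

/-- The characteristic sequence of an unbroken chain of triples:
`cᵢ` is the `m`-value of the map relating `qᵢ` and `qᵢ₊₁`. -/
noncomputable def charSeq (Q : ℤ → ℂ × ℂ × ℂ) (i : ℤ) : ℕ :=
  if i % 2 = 0 then m1 (Q i) else m2 (Q i)

section
variable {ζ : ℂ} (hζ : IsPrimitiveRoot ζ 9)
include hζ

lemma zz0 : ζ ≠ 0 := hζ.ne_zero (by norm_num)

lemma zmod (x : ℕ) : ζ ^ x = ζ ^ (x % 9) := by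
  conv_lhs => rw [← Nat.div_add_mod x 9]
  rw [pow_add, pow_mul, hζ.pow_eq_one, one_pow, one_mul]

lemma zeq {x y : ℕ} (h : x % 9 = y % 9) : ζ ^ x = ζ ^ y := by
  rw [zmod hζ x, zmod hζ y, h]

lemma zinj {x y : ℕ} : ζ ^ x = ζ ^ y ↔ x % 9 = y % 9 := by
  refine ⟨fun h => ?_, zeq hζ⟩
  rw [zmod hζ x, zmod hζ y] at h
  exact hζ.pow_inj (Nat.mod_lt _ (by norm_num)) (Nat.mod_lt _ (by norm_num)) h

lemma zone {x : ℕ} : ζ ^ x = 1 ↔ x % 9 = 0 := by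
  rw [hζ.pow_eq_one_iff_dvd, Nat.dvd_iff_mod_eq_zero]

lemma zinv {x y : ℕ} (h : (x + y) % 9 = 0) : (ζ ^ x)⁻¹ = ζ ^ y :=
  inv_eq_of_mul_eq_one_right (by rw [← pow_add]; exact (zone hζ).mpr h)

lemma zsolve {x : ℂ} {s r v : ℕ} (h : x * ζ ^ s = ζ ^ r) (hm : (v + s) % 9 = r % 9) :
    x = ζ ^ v := by
  have := pow_ne_zero s (zz0 hζ)
  apply mul_right_cancel₀ this
  rw [h, ← pow_add, zeq hζ hm]

lemma zsum {a : ℕ} (ha : a % 9 ≠ 0) (n : ℕ) :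
    (∑ k ∈ Finset.range (n + 1), (ζ ^ a) ^ k) = 0 ↔ (a * (n + 1)) % 9 = 0 := by
  have h1 : (ζ : ℂ) ^ a ≠ 1 := fun h => ha ((zone hζ).mp h)
  rw [geom_sum_eq h1, div_eq_zero_iff, sub_eq_zero, ← pow_mul, zone hζ]
  have h2 : (ζ : ℂ) ^ a - 1 ≠ 0 := sub_ne_zero.mpr h1
  tauto

end

section
variable {ζ : ℂ} (hζ : IsPrimitiveRoot ζ 9)
include hζ

lemma m2set_iff (a : ℂ) (b1 c1 : ℕ) (hc : c1 % 9 ≠ 0) (k : ℕ) :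
    k ∈ m2Set (a, ζ ^ b1, ζ ^ c1) ↔ (c1 * (k + 1)) % 9 = 0 ∨ (c1 * k + b1) % 9 = 0 := by
  simp only [m2Set, Set.mem_setOf_eq]
  rw [zsum hζ hc, ← pow_mul, ← pow_add, zone hζ]

lemma m2_val (a : ℂ) (b1 c1 v : ℕ) (hc : c1 % 9 ≠ 0)
    (hv : (c1 * (v + 1)) % 9 = 0 ∨ (c1 * v + b1) % 9 = 0)
    (hmin : ∀ k < v, ¬((c1 * (k + 1)) % 9 = 0 ∨ (c1 * k + b1) % 9 = 0)) :
    M2Defined (a, ζ ^ b1, ζ ^ c1) ∧ m2 (a, ζ ^ b1, ζ ^ c1) = v := by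
  have hvmem : v ∈ m2Set (a, ζ ^ b1, ζ ^ c1) := (m2set_iff hζ a b1 c1 hc v).mpr hv
  refine ⟨⟨v, hvmem⟩, ?_⟩
  refine le_antisymm (Nat.sInf_le hvmem) (le_csInf ⟨v, hvmem⟩ fun k hk => ?_)
  by_contra h; push_neg at h
  exact hmin k h ((m2set_iff hζ a b1 c1 hc k).mp hk)

lemma L1 (a : ℂ) : M2Defined (a, ζ ^ 8, ζ ^ 6) ∧ m2 (a, ζ ^ 8, ζ ^ 6) = 2 :=
  m2_val hζ a 8 6 2 (by norm_num) (by norm_num) (by intro k hk; interval_cases k <;> norm_num)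

lemma L2 (a : ℂ) : M2Defined (a, ζ ^ 4, ζ ^ 1) ∧ m2 (a, ζ ^ 4, ζ ^ 1) = 5 :=
  m2_val hζ a 4 1 5 (by norm_num) (by norm_num) (by intro k hk; interval_cases k <;> norm_num)

lemma L3 (a : ℂ) : M2Defined (a, ζ ^ 4, ζ ^ 6) ∧ m2 (a, ζ ^ 4, ζ ^ 6) = 2 :=
  m2_val hζ a 4 6 2 (by norm_num) (by norm_num) (by intro k hk; interval_cases k <;> norm_num)

end

lemma m1_eq_m2 (a b c : ℂ) : m1 (a, b, c) = m2 (c, b, a) := rfl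

lemma M1_iff_M2 (a b c : ℂ) : M1Defined (a, b, c) ↔ M2Defined (c, b, a) := Iff.rfl

lemma sigma_swap (a b c : ℂ) :
    sigma2 (c, b, a) = ((sigma1 (a, b, c)).2.2, (sigma1 (a, b, c)).2.1, (sigma1 (a, b, c)).1) := by
  simp only [sigma1, sigma2, ← m1_eq_m2]
  exact Prod.ext (by ring) rfl

section
variable {ζ : ℂ} (hζ : IsPrimitiveRoot ζ 9)
include hζ

lemma L1' (c : ℂ) : M1Defined (ζ ^ 6, ζ ^ 8, c) ∧ m1 (ζ ^ 6, ζ ^ 8, c) = 2 := by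
  rw [M1_iff_M2, m1_eq_m2]; exact L1 hζ c

lemma L2' (c : ℂ) : M1Defined (ζ ^ 1, ζ ^ 4, c) ∧ m1 (ζ ^ 1, ζ ^ 4, c) = 5 := by
  rw [M1_iff_M2, m1_eq_m2]; exact L2 hζ c

lemma L3' (c : ℂ) : M1Defined (ζ ^ 6, ζ ^ 4, c) ∧ m1 (ζ ^ 6, ζ ^ 4, c) = 2 := by
  rw [M1_iff_M2, m1_eq_m2]; exact L3 hζ c

lemma F0 : sigma1 (ζ ^ 6, ζ ^ 8, ζ ^ 6) = (ζ ^ 6, ζ ^ 4, ζ ^ 1) := by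
  simp only [sigma1, (L1' hζ (ζ ^ 6)).2]
  refine Prod.ext rfl (Prod.ext ?_ ?_)
  · simp only [← pow_mul, ← mul_inv, ← pow_add]; exact zinv hζ (by norm_num)
  · simp only [← pow_mul, ← pow_add]; exact zeq hζ (by norm_num)

lemma F1 : sigma2 (ζ ^ 6, ζ ^ 4, ζ ^ 1) = (ζ ^ 6, ζ ^ 4, ζ ^ 1) := by
  simp only [sigma2, (L2 hζ (ζ ^ 6)).2]
  refine Prod.ext ?_ (Prod.ext ?_ rfl)
  · simp only [← pow_mul, ← pow_add]; exact zeq hζ (by norm_num)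
  · simp only [← pow_mul, ← mul_inv, ← pow_add]; exact zinv hζ (by norm_num)

lemma F2 : sigma1 (ζ ^ 6, ζ ^ 4, ζ ^ 1) = (ζ ^ 6, ζ ^ 8, ζ ^ 6) := by
  simp only [sigma1, (L3' hζ (ζ ^ 1)).2]
  refine Prod.ext rfl (Prod.ext ?_ ?_)
  · simp only [← pow_mul, ← mul_inv, ← pow_add]; exact zinv hζ (by norm_num)
  · simp only [← pow_mul, ← pow_add]; exact zeq hζ (by norm_num)

lemma F3 : sigma2 (ζ ^ 6, ζ ^ 8, ζ ^ 6) = (ζ ^ 1, ζ ^ 4, ζ ^ 6) := by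
  simp only [sigma2, (L1 hζ (ζ ^ 6)).2]
  refine Prod.ext ?_ (Prod.ext ?_ rfl)
  · simp only [← pow_mul, ← pow_add]; exact zeq hζ (by norm_num)
  · simp only [← pow_mul, ← mul_inv, ← pow_add]; exact zinv hζ (by norm_num)

lemma F4 : sigma1 (ζ ^ 1, ζ ^ 4, ζ ^ 6) = (ζ ^ 1, ζ ^ 4, ζ ^ 6) := by
  simp only [sigma1, (L2' hζ (ζ ^ 6)).2]
  refine Prod.ext rfl (Prod.ext ?_ ?_)
  · simp only [← pow_mul, ← mul_inv, ← pow_add]; exact zinv hζ (by norm_num)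
  · simp only [← pow_mul, ← pow_add]; exact zeq hζ (by norm_num)

lemma F5 : sigma2 (ζ ^ 1, ζ ^ 4, ζ ^ 6) = (ζ ^ 6, ζ ^ 8, ζ ^ 6) := by
  simp only [sigma2, (L3 hζ (ζ ^ 1)).2]
  refine Prod.ext ?_ (Prod.ext ?_ rfl)
  · simp only [← pow_mul, ← pow_add]; exact zeq hζ (by norm_num)
  · simp only [← pow_mul, ← mul_inv, ← pow_add]; exact zinv hζ (by norm_num)

end


section
variable {ζ : ℂ} (hζ : IsPrimitiveRoot ζ 9)
include hζ

lemma S1 (t : ℂ × ℂ × ℂ) (hM : M2Defined t) (hs : sigma2 t = (ζ ^ 6, ζ ^ 8, ζ ^ 6)) :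
    t = (ζ ^ 1, ζ ^ 4, ζ ^ 6) := by
  obtain ⟨a, b, c⟩ := t
  simp only [sigma2, Prod.mk.injEq] at hs
  obtain ⟨hs1, hs2, hs3⟩ := hs
  subst hs3
  set m := m2 (a, b, ζ ^ 6) with hmdef
  have hzc : (ζ : ℂ) ^ 6 ≠ 0 := pow_ne_zero _ (zz0 hζ)
  have hb : b⁻¹ = ζ ^ (6 * (2 * m) + 8) := by
    have h0 : b⁻¹ = (ζ ^ 6) ^ (2 * m) * (((ζ ^ 6) ^ (2 * m))⁻¹ * b⁻¹) := by
      rw [← mul_assoc, mul_inv_cancel₀ (pow_ne_zero _ hzc), one_mul]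
    rw [h0, hs2, ← pow_mul, ← pow_add]
  have hb0 : b ≠ 0 := by
    intro h
    rw [h, inv_zero] at hb
    exact (pow_ne_zero _ (zz0 hζ)) hb.symm
  have hpowiff : ∀ k : ℕ, ((ζ ^ 6 : ℂ)) ^ k * b = 1 ↔ (6 * k) % 9 = (6 * (2 * m) + 8) % 9 := by
    intro k
    rw [← pow_mul]
    constructor
    · intro h
      have h2 : ζ ^ (6 * k) = b⁻¹ := eq_inv_of_mul_eq_one_left h
      rw [hb] at h2
      exact (zinj hζ).mp h2
    · intro h
      rw [zeq hζ h, ← hb]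
      exact inv_mul_cancel₀ hb0
  have hmem : m ∈ m2Set (a, b, ζ ^ 6) := Nat.sInf_mem hM
  simp only [m2Set, Set.mem_setOf_eq] at hmem
  rw [zsum hζ (by norm_num), hpowiff m] at hmem
  have hsum6 : (6 * (m + 1)) % 9 = 0 := by
    rcases hmem with h | h
    · exact h
    · omega
  have h2mem : 2 ∈ m2Set (a, b, ζ ^ 6) := by
    simp only [m2Set, Set.mem_setOf_eq]
    exact Or.inl ((zsum hζ (by norm_num) 2).mpr (by norm_num))
  have hle : m ≤ 2 := Nat.sInf_le h2mem
  have hmv : m = 2 := by omega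
  have hbv : b = ζ ^ 4 := by
    rw [← inv_inv b, hb, hmv]
    exact zinv hζ (by norm_num)
  rw [hmv, hbv] at hs1
  rw [← pow_mul, ← pow_mul, mul_assoc, ← pow_add] at hs1
  exact Prod.ext (zsolve hζ hs1 (by norm_num)) (Prod.ext hbv rfl)

lemma S3 (t : ℂ × ℂ × ℂ) (hM : M2Defined t) (hs : sigma2 t = (ζ ^ 1, ζ ^ 4, ζ ^ 6)) :
    t = (ζ ^ 6, ζ ^ 8, ζ ^ 6) := by
  obtain ⟨a, b, c⟩ := t
  simp only [sigma2, Prod.mk.injEq] at hs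
  obtain ⟨hs1, hs2, hs3⟩ := hs
  subst hs3
  set m := m2 (a, b, ζ ^ 6) with hmdef
  have hzc : (ζ : ℂ) ^ 6 ≠ 0 := pow_ne_zero _ (zz0 hζ)
  have hb : b⁻¹ = ζ ^ (6 * (2 * m) + 4) := by
    have h0 : b⁻¹ = (ζ ^ 6) ^ (2 * m) * (((ζ ^ 6) ^ (2 * m))⁻¹ * b⁻¹) := by
      rw [← mul_assoc, mul_inv_cancel₀ (pow_ne_zero _ hzc), one_mul]
    rw [h0, hs2, ← pow_mul, ← pow_add]
  have hb0 : b ≠ 0 := by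
    intro h
    rw [h, inv_zero] at hb
    exact (pow_ne_zero _ (zz0 hζ)) hb.symm
  have hpowiff : ∀ k : ℕ, ((ζ ^ 6 : ℂ)) ^ k * b = 1 ↔ (6 * k) % 9 = (6 * (2 * m) + 4) % 9 := by
    intro k
    rw [← pow_mul]
    constructor
    · intro h
      have h2 : ζ ^ (6 * k) = b⁻¹ := eq_inv_of_mul_eq_one_left h
      rw [hb] at h2
      exact (zinj hζ).mp h2
    · intro h
      rw [zeq hζ h, ← hb]
      exact inv_mul_cancel₀ hb0
  have hmem : m ∈ m2Set (a, b, ζ ^ 6) := Nat.sInf_mem hM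
  simp only [m2Set, Set.mem_setOf_eq] at hmem
  rw [zsum hζ (by norm_num), hpowiff m] at hmem
  have hsum6 : (6 * (m + 1)) % 9 = 0 := by
    rcases hmem with h | h
    · exact h
    · omega
  have h2mem : 2 ∈ m2Set (a, b, ζ ^ 6) := by
    simp only [m2Set, Set.mem_setOf_eq]
    exact Or.inl ((zsum hζ (by norm_num) 2).mpr (by norm_num))
  have hle : m ≤ 2 := Nat.sInf_le h2mem
  have hmv : m = 2 := by omega
  have hbv : b = ζ ^ 8 := by
    rw [← inv_inv b, hb, hmv]
    exact zinv hζ (by norm_num)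
  rw [hmv, hbv] at hs1
  rw [← pow_mul, ← pow_mul, mul_assoc, ← pow_add] at hs1
  exact Prod.ext (zsolve hζ hs1 (by norm_num)) (Prod.ext hbv rfl)

lemma S2 (t : ℂ × ℂ × ℂ) (hM : M2Defined t) (hs : sigma2 t = (ζ ^ 6, ζ ^ 4, ζ ^ 1)) :
    t = (ζ ^ 6, ζ ^ 4, ζ ^ 1) := by
  obtain ⟨a, b, c⟩ := t
  simp only [sigma2, Prod.mk.injEq] at hs
  obtain ⟨hs1, hs2, hs3⟩ := hs
  subst hs3
  set m := m2 (a, b, ζ ^ 1) with hmdef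
  have hzc : (ζ : ℂ) ^ 1 ≠ 0 := pow_ne_zero _ (zz0 hζ)
  have hb : b⁻¹ = ζ ^ (1 * (2 * m) + 4) := by
    have h0 : b⁻¹ = (ζ ^ 1) ^ (2 * m) * (((ζ ^ 1) ^ (2 * m))⁻¹ * b⁻¹) := by
      rw [← mul_assoc, mul_inv_cancel₀ (pow_ne_zero _ hzc), one_mul]
    rw [h0, hs2, ← pow_mul, ← pow_add]
  have hb0 : b ≠ 0 := by
    intro h
    rw [h, inv_zero] at hb
    exact (pow_ne_zero _ (zz0 hζ)) hb.symm
  have hpowiff : ∀ k : ℕ, ((ζ ^ 1 : ℂ)) ^ k * b = 1 ↔ (1 * k) % 9 = (1 * (2 * m) + 4) % 9 := by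
    intro k
    rw [← pow_mul]
    constructor
    · intro h
      have h2 : ζ ^ (1 * k) = b⁻¹ := eq_inv_of_mul_eq_one_left h
      rw [hb] at h2
      exact (zinj hζ).mp h2
    · intro h
      rw [zeq hζ h, ← hb]
      exact inv_mul_cancel₀ hb0
  have hmem : m ∈ m2Set (a, b, ζ ^ 1) := Nat.sInf_mem hM
  simp only [m2Set, Set.mem_setOf_eq] at hmem
  rw [zsum hζ (by norm_num), hpowiff m] at hmem
  have hmv : m = 5 := by
    rcases hmem with h | h
    · have h2mem : 2 ∈ m2Set (a, b, ζ ^ 1) := by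
        simp only [m2Set, Set.mem_setOf_eq]
        exact Or.inr ((hpowiff 2).mpr (by omega))
      have hle : m ≤ 2 := Nat.sInf_le h2mem
      omega
    · have h5mem : 5 ∈ m2Set (a, b, ζ ^ 1) := by
        simp only [m2Set, Set.mem_setOf_eq]
        exact Or.inr ((hpowiff 5).mpr (by omega))
      have hle : m ≤ 5 := Nat.sInf_le h5mem
      omega
  have hbv : b = ζ ^ 4 := by
    rw [← inv_inv b, hb, hmv]
    exact zinv hζ (by norm_num)
  rw [hmv, hbv] at hs1
  rw [← pow_mul, ← pow_mul, mul_assoc, ← pow_add] at hs1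
  exact Prod.ext (zsolve hζ hs1 (by norm_num)) (Prod.ext hbv rfl)

end

section
variable {ζ : ℂ} (hζ : IsPrimitiveRoot ζ 9)
include hζ

lemma S1' (t : ℂ × ℂ × ℂ) (hM : M1Defined t) (hs : sigma1 t = (ζ ^ 6, ζ ^ 8, ζ ^ 6)) :
    t = (ζ ^ 6, ζ ^ 4, ζ ^ 1) := by
  obtain ⟨a, b, c⟩ := t
  have hM2 : M2Defined (c, b, a) := (M1_iff_M2 a b c).mp hM
  have hs2 : sigma2 (c, b, a) = (ζ ^ 6, ζ ^ 8, ζ ^ 6) := by rw [sigma_swap a b c, hs]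
  have h := S1 hζ (c, b, a) hM2 hs2
  rw [Prod.mk.injEq, Prod.mk.injEq] at h
  exact Prod.ext h.2.2 (Prod.ext h.2.1 h.1)

lemma S2' (t : ℂ × ℂ × ℂ) (hM : M1Defined t) (hs : sigma1 t = (ζ ^ 1, ζ ^ 4, ζ ^ 6)) :
    t = (ζ ^ 1, ζ ^ 4, ζ ^ 6) := by
  obtain ⟨a, b, c⟩ := t
  have hM2 : M2Defined (c, b, a) := (M1_iff_M2 a b c).mp hM
  have hs2 : sigma2 (c, b, a) = (ζ ^ 6, ζ ^ 4, ζ ^ 1) := by rw [sigma_swap a b c, hs]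
  have h := S2 hζ (c, b, a) hM2 hs2
  rw [Prod.mk.injEq, Prod.mk.injEq] at h
  exact Prod.ext h.2.2 (Prod.ext h.2.1 h.1)

lemma S3' (t : ℂ × ℂ × ℂ) (hM : M1Defined t) (hs : sigma1 t = (ζ ^ 6, ζ ^ 4, ζ ^ 1)) :
    t = (ζ ^ 6, ζ ^ 8, ζ ^ 6) := by
  obtain ⟨a, b, c⟩ := t
  have hM2 : M2Defined (c, b, a) := (M1_iff_M2 a b c).mp hM
  have hs2 : sigma2 (c, b, a) = (ζ ^ 1, ζ ^ 4, ζ ^ 6) := by rw [sigma_swap a b c, hs]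
  have h := S3 hζ (c, b, a) hM2 hs2
  rw [Prod.mk.injEq, Prod.mk.injEq] at h
  exact Prod.ext h.2.2 (Prod.ext h.2.1 h.1)

end

/-- Period-6 table of triples for the chain. -/
def Tbl (ζ : ℂ) (r : ℤ) : ℂ × ℂ × ℂ :=
  if r = 0 then (ζ ^ 6, ζ ^ 8, ζ ^ 6) else if r = 1 then (ζ ^ 6, ζ ^ 4, ζ ^ 1)
  else if r = 2 then (ζ ^ 6, ζ ^ 4, ζ ^ 1) else if r = 3 then (ζ ^ 6, ζ ^ 8, ζ ^ 6)
  else if r = 4 then (ζ ^ 1, ζ ^ 4, ζ ^ 6) else (ζ ^ 1, ζ ^ 4, ζ ^ 6)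

lemma Tbl0 (ζ : ℂ) : Tbl ζ 0 = (ζ ^ 6, ζ ^ 8, ζ ^ 6) := by norm_num [Tbl]
lemma Tbl1 (ζ : ℂ) : Tbl ζ 1 = (ζ ^ 6, ζ ^ 4, ζ ^ 1) := by norm_num [Tbl]
lemma Tbl2 (ζ : ℂ) : Tbl ζ 2 = (ζ ^ 6, ζ ^ 4, ζ ^ 1) := by norm_num [Tbl]
lemma Tbl3 (ζ : ℂ) : Tbl ζ 3 = (ζ ^ 6, ζ ^ 8, ζ ^ 6) := by norm_num [Tbl]
lemma Tbl4 (ζ : ℂ) : Tbl ζ 4 = (ζ ^ 1, ζ ^ 4, ζ ^ 6) := by norm_num [Tbl]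
lemma Tbl5 (ζ : ℂ) : Tbl ζ 5 = (ζ ^ 1, ζ ^ 4, ζ ^ 6) := by norm_num [Tbl]

section
variable {ζ : ℂ} (hζ : IsPrimitiveRoot ζ 9)
include hζ

lemma stepL (i : ℤ) :
    (Even i → M1Defined (Tbl ζ (i % 6)) ∧ Tbl ζ ((i + 1) % 6) = sigma1 (Tbl ζ (i % 6))) ∧
    (¬Even i → M2Defined (Tbl ζ (i % 6)) ∧ Tbl ζ ((i + 1) % 6) = sigma2 (Tbl ζ (i % 6))) := by
  rw [Int.even_iff]
  have hr : i % 6 = 0 ∨ i % 6 = 1 ∨ i % 6 = 2 ∨ i % 6 = 3 ∨ i % 6 = 4 ∨ i % 6 = 5 := by omega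
  rcases hr with h | h | h | h | h | h
  · rw [h, show (i + 1) % 6 = 1 by omega, Tbl0, Tbl1]
    exact ⟨fun _ => ⟨(L1' hζ _).1, (F0 hζ).symm⟩, fun ho => absurd (by omega) ho⟩
  · rw [h, show (i + 1) % 6 = 2 by omega, Tbl1, Tbl2]
    exact ⟨fun he => absurd he (by omega), fun _ => ⟨(L2 hζ _).1, (F1 hζ).symm⟩⟩
  · rw [h, show (i + 1) % 6 = 3 by omega, Tbl2, Tbl3]
    exact ⟨fun _ => ⟨(L3' hζ _).1, (F2 hζ).symm⟩, fun ho => absurd (by omega) ho⟩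
  · rw [h, show (i + 1) % 6 = 4 by omega, Tbl3, Tbl4]
    exact ⟨fun he => absurd he (by omega), fun _ => ⟨(L1 hζ _).1, (F3 hζ).symm⟩⟩
  · rw [h, show (i + 1) % 6 = 5 by omega, Tbl4, Tbl5]
    exact ⟨fun _ => ⟨(L2' hζ _).1, (F4 hζ).symm⟩, fun ho => absurd (by omega) ho⟩
  · rw [h, show (i + 1) % 6 = 0 by omega, Tbl5, Tbl0]
    exact ⟨fun he => absurd he (by omega), fun _ => ⟨(L3 hζ _).1, (F5 hζ).symm⟩⟩

end

section
variable {ζ : ℂ} (hζ : IsPrimitiveRoot ζ 9)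
include hζ

lemma chain_eq_tbl (Q : ℤ → ℂ × ℂ × ℂ) (hQ : IsQChain Q)
    (hQ0 : Q 0 = (ζ ^ 6, ζ ^ 8, ζ ^ 6)) : ∀ i : ℤ, Q i = Tbl ζ (i % 6) := by
  intro i
  induction i using Int.induction_on with
  | zero => rw [hQ0, show (0 : ℤ) % 6 = 0 by omega, Tbl0]
  | succ i ih =>
    by_cases he : Even ((i : ℤ))
    · rw [((hQ i).1 he).2, ih, ← ((stepL hζ (i : ℤ)).1 he).2]
    · rw [((hQ i).2 he).2, ih, ← ((stepL hζ (i : ℤ)).2 he).2]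
  | pred i ih =>
    have hr : (-(i : ℤ) - 1) % 6 = 0 ∨ (-(i : ℤ) - 1) % 6 = 1 ∨ (-(i : ℤ) - 1) % 6 = 2 ∨
        (-(i : ℤ) - 1) % 6 = 3 ∨ (-(i : ℤ) - 1) % 6 = 4 ∨ (-(i : ℤ) - 1) % 6 = 5 := by omega
    have hs0 : (-(i : ℤ) - 1) + 1 = -(i : ℤ) := by ring
    rcases hr with h | h | h | h | h | h
    · have he : Even (-(i : ℤ) - 1) := Int.even_iff.mpr (by omega)
      obtain ⟨hM, hstep⟩ := (hQ (-(i : ℤ) - 1)).1 he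
      rw [hs0, ih, show (-(i : ℤ)) % 6 = 1 by omega, Tbl1] at hstep
      rw [S3' hζ _ hM hstep.symm, h, Tbl0]
    · have he : ¬Even (-(i : ℤ) - 1) := by rw [Int.even_iff]; omega
      obtain ⟨hM, hstep⟩ := (hQ (-(i : ℤ) - 1)).2 he
      rw [hs0, ih, show (-(i : ℤ)) % 6 = 2 by omega, Tbl2] at hstep
      rw [S2 hζ _ hM hstep.symm, h, Tbl1]
    · have he : Even (-(i : ℤ) - 1) := Int.even_iff.mpr (by omega)
      obtain ⟨hM, hstep⟩ := (hQ (-(i : ℤ) - 1)).1 he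
      rw [hs0, ih, show (-(i : ℤ)) % 6 = 3 by omega, Tbl3] at hstep
      rw [S1' hζ _ hM hstep.symm, h, Tbl2]
    · have he : ¬Even (-(i : ℤ) - 1) := by rw [Int.even_iff]; omega
      obtain ⟨hM, hstep⟩ := (hQ (-(i : ℤ) - 1)).2 he
      rw [hs0, ih, show (-(i : ℤ)) % 6 = 4 by omega, Tbl4] at hstep
      rw [S3 hζ _ hM hstep.symm, h, Tbl3]
    · have he : Even (-(i : ℤ) - 1) := Int.even_iff.mpr (by omega)
      obtain ⟨hM, hstep⟩ := (hQ (-(i : ℤ) - 1)).1 he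
      rw [hs0, ih, show (-(i : ℤ)) % 6 = 5 by omega, Tbl5] at hstep
      rw [S2' hζ _ hM hstep.symm, h, Tbl4]
    · have he : ¬Even (-(i : ℤ) - 1) := by rw [Int.even_iff]; omega
      obtain ⟨hM, hstep⟩ := (hQ (-(i : ℤ) - 1)).2 he
      rw [hs0, ih, show (-(i : ℤ)) % 6 = 0 by omega, Tbl0] at hstep
      rw [S1 hζ _ hM hstep.symm, h, Tbl5]

end

/-- For a primitive 9th root of unity `ζ`, the triple `(ζ⁶, ζ⁸, ζ⁶)` is not
broken, and its characteristic sequence is periodic with period `3`: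
`c₋₁ = 2`, `c₀ = 2`, `c₁ = 5` and `cᵢ₊₃ = cᵢ` for all `i`. -/
theorem example_nine (ζ : ℂ) (hζ : IsPrimitiveRoot ζ 9) :
    (∃ Q : ℤ → ℂ × ℂ × ℂ, IsQChain Q ∧ Q 0 = (ζ ^ 6, ζ ^ 8, ζ ^ 6)) ∧
    ∀ Q : ℤ → ℂ × ℂ × ℂ, IsQChain Q → Q 0 = (ζ ^ 6, ζ ^ 8, ζ ^ 6) →
      charSeq Q (-1) = 2 ∧ charSeq Q 0 = 2 ∧ charSeq Q 1 = 5 ∧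
      ∀ i : ℤ, charSeq Q (i + 3) = charSeq Q i := by
  constructor
  · exact ⟨fun i => Tbl ζ (i % 6), fun i => stepL hζ i,
      by norm_num [Tbl]⟩
  · intro Q hQ hQ0
    have key := chain_eq_tbl hζ Q hQ hQ0
    refine ⟨?_, ?_, ?_, ?_⟩
    · rw [charSeq, if_neg (by omega), key, show (-1 : ℤ) % 6 = 5 by omega, Tbl5, (L3 hζ _).2]
    · rw [charSeq, if_pos (by omega), key, show (0 : ℤ) % 6 = 0 by omega, Tbl0, (L1' hζ _).2]
    · rw [charSeq, if_neg (by omega), key, show (1 : ℤ) % 6 = 1 by omega, Tbl1, (L2 hζ _).2]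
    · intro i
      have hr : i % 6 = 0 ∨ i % 6 = 1 ∨ i % 6 = 2 ∨ i % 6 = 3 ∨ i % 6 = 4 ∨ i % 6 = 5 := by
        omega
      rcases hr with h | h | h | h | h | h
      · rw [charSeq, charSeq, if_neg (by omega), if_pos (by omega), key, key,
          show (i + 3) % 6 = 3 by omega, h, Tbl3, Tbl0, (L1 hζ _).2, (L1' hζ _).2]
      · rw [charSeq, charSeq, if_pos (by omega), if_neg (by omega), key, key,
          show (i + 3) % 6 = 4 by omega, h, Tbl4, Tbl1, (L2' hζ _).2, (L2 hζ _).2]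
      · rw [charSeq, charSeq, if_neg (by omega), if_pos (by omega), key, key,
          show (i + 3) % 6 = 5 by omega, h, Tbl5, Tbl2, (L3 hζ _).2, (L3' hζ _).2]
      · rw [charSeq, charSeq, if_pos (by omega), if_neg (by omega), key, key,
          show (i + 3) % 6 = 0 by omega, h, Tbl0, Tbl3, (L1' hζ _).2, (L1 hζ _).2]
      · rw [charSeq, charSeq, if_neg (by omega), if_pos (by omega), key, key,
          show (i + 3) % 6 = 1 by omega, h, Tbl1, Tbl4, (L2 hζ _).2, (L2' hζ _).2]
      · rw [charSeq, charSeq, if_pos (by omega), if_neg (by omega), key, key,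
          show (i + 3) % 6 = 2 by omega, h, Tbl2, Tbl5, (L3' hζ _).2, (L3 hζ _).2]
end

section
/- For every quiddity cycle c other than (0,0) and (1,1,1), the map δ is well defined at c (the rewriting process terminates with a result independent of the order of rule applications) and δ(c) belongs to 𝒜', i.e., δ(c) is a quiddity cycle of even length with exactly half of its entries equal to 1. -/
/-- One generating move of the dihedral action on finite sequences:
cyclic rotation by one, or reversal. -/
def dihStep (c d : List ℕ) : Prop := d = c.rotate 1 ∨ d = c.reverse

/-- The equivalence relation on finite sequences generated by cyclic
rotations and reversal (the dihedral group action). -/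
def DihEquiv : List ℕ → List ℕ → Prop := Relation.EqvGen dihStep

/-- The lists that are representatives of quiddity cycles: the smallest
dihedrally closed collection containing `(0,0)` and closed under the rule
`(c₁,…,cₙ) ↦ (c₁+1, 1, c₂+1, c₃, …, cₙ)`. -/
inductive IsQuiddity : List ℕ → Prop
  | base : IsQuiddity [0, 0]
  | dih {c d : List ℕ} : IsQuiddity c → dihStep c d → IsQuiddity d
  | grow {a b : ℕ} {t : List ℕ} : IsQuiddity (a :: b :: t) →
      IsQuiddity ((a + 1) :: 1 :: (b + 1) :: t)

/-- The (class of the) cycle `c` contains the finite sequence `d`: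
some representative of `c` has `d` as a block of consecutive entries. -/
def CycContains (c d : List ℕ) : Prop := ∃ c', DihEquiv c c' ∧ d <:+: c'

/-- The setoid given by the dihedral group action on finite sequences. -/
def dihSetoid : Setoid (List ℕ) := Relation.EqvGen.setoid dihStep

/-- Classes of finite sequences modulo the dihedral action. -/
abbrev Cyc : Type := Quotient dihSetoid

/-- The class of a finite sequence modulo the dihedral action. -/
def cyc (c : List ℕ) : Cyc := Quotient.mk dihSetoid c

/-- The set `𝒜` of quiddity cycles, as classes. -/
def QuiddityCyc : Set Cyc := {x | ∃ c, IsQuiddity c ∧ x = cyc c}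

/-- The set `𝒜'` of quiddity cycles of even length whose entries equal to `1`
make up exactly half of all entries. -/
def QuiddityCyc' : Set Cyc :=
  {x | ∃ c, IsQuiddity c ∧ Even c.length ∧ c.count 1 = c.length / 2 ∧ x = cyc c}

/-- The map `ψ` on finite sequences: `(c₁,…,cₘ) ↦ (c₁+2, 1, c₂+2, 1, …, cₘ+2, 1)`. -/
def psiL (c : List ℕ) : List ℕ := (c.map fun a => [a + 2, 1]).flatten

/-- The map `ι`: prepend an entry `1`. -/
def iotaL (c : List ℕ) : List ℕ := 1 :: c

/-- One rewriting step of the map `ρ` on finite sequences: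
(a) two adjacent entries `> 1` get a `1` inserted between them and are increased;
(b) a first entry `> 1` gets a `1` prepended and is increased;
(c) a last entry `> 1` gets a `1` appended and is increased. -/
inductive rhoStep : List ℕ → List ℕ → Prop
  | mid (u v : List ℕ) (a b : ℕ) :
      rhoStep (u ++ (a + 2) :: (b + 2) :: v) (u ++ (a + 3) :: 1 :: (b + 3) :: v)
  | head (a : ℕ) (t : List ℕ) : rhoStep ((a + 2) :: t) (1 :: (a + 3) :: t)
  | last (u : List ℕ) (a : ℕ) : rhoStep (u ++ [a + 2]) (u ++ [a + 3, 1])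

/-- `ρ c = d`: iterated application of the rewriting rules starting from `c`
terminates in `d`, to which no rule applies anymore. -/
def RhoEval (c d : List ℕ) : Prop :=
  Relation.ReflTransGen rhoStep c d ∧ ∀ e, ¬ rhoStep d e

/-- One rewriting step of the map `δ` on classes: two cyclically adjacent
entries `> 1` get a `1` inserted between them and are increased. -/
def deltaStep (x y : Cyc) : Prop :=
  ∃ a b t, x = cyc ((a + 2) :: (b + 2) :: t) ∧ y = cyc ((a + 3) :: 1 :: (b + 3) :: t)

/-- `δ x = y`: iterated application of the rewriting rule starting from `x`
terminates in `y`, to which the rule does not apply anymore. -/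
def DeltaEval (x y : Cyc) : Prop :=
  Relation.ReflTransGen deltaStep x y ∧ ∀ z, ¬ deltaStep y z

namespace DW


def inc (a b : ℕ) : ℕ := if 2 ≤ a ∧ 2 ≤ b then 1 else 0
def ins (a b : ℕ) : List ℕ := if 2 ≤ a ∧ 2 ≤ b then [1] else []
def blockOf (p v q : ℕ) : List ℕ := (v + inc p v + inc v q) :: ins v q

def lin : ℕ → List ℕ → ℕ → List ℕ
  | _, [], _ => []
  | p, v :: t, q => blockOf p v (t.headD q) ++ lin v t q

def nf : List ℕ → List ℕ
  | [] => []
  | v :: t => lin (t.getLastD v) (v :: t) v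

lemma inc_comm (a b : ℕ) : inc a b = inc b a := by
  simp [inc, and_comm]

lemma ins_comm (a b : ℕ) : ins a b = ins b a := by
  simp [ins, and_comm]

lemma ins_reverse (a b : ℕ) : (ins a b).reverse = ins a b := by
  unfold ins; split <;> rfl

lemma inc_congr_left {a a' : ℕ} (h : 2 ≤ a ↔ 2 ≤ a') (b : ℕ) : inc a b = inc a' b := by
  unfold inc; rw [if_congr (and_congr_left' h) rfl rfl]

lemma inc_congr_right {b b' : ℕ} (h : 2 ≤ b ↔ 2 ≤ b') (a : ℕ) : inc a b = inc a' b' → True := by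
  intro; trivial

lemma inc_congr {a a' b b' : ℕ} (ha : 2 ≤ a ↔ 2 ≤ a') (hb : 2 ≤ b ↔ 2 ≤ b') :
    inc a b = inc a' b' := by
  unfold inc; rw [if_congr (and_congr ha hb) rfl rfl]

lemma ins_congr {a a' b b' : ℕ} (ha : 2 ≤ a ↔ 2 ≤ a') (hb : 2 ≤ b ↔ 2 ≤ b') :
    ins a b = ins a' b' := by
  unfold ins; rw [if_congr (and_congr ha hb) rfl rfl]

lemma inc_le (a b : ℕ) : inc a b ≤ 1 := by unfold inc; split <;> omega

lemma inc_of_not_left {a : ℕ} (h : ¬ 2 ≤ a) (b : ℕ) : inc a b = 0 := by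
  unfold inc; rw [if_neg]; tauto

lemma inc_of_not_right {b : ℕ} (h : ¬ 2 ≤ b) (a : ℕ) : inc a b = 0 := by
  unfold inc; rw [if_neg]; tauto

lemma two_le_block (p v q : ℕ) : 2 ≤ v + inc p v + inc v q ↔ 2 ≤ v := by
  by_cases h : 2 ≤ v
  · constructor <;> intro _ <;> omega
  · rw [inc_of_not_right h, inc_of_not_left h]; omega

lemma lin_length (p q : ℕ) (l : List ℕ) : l.length ≤ (lin p l q).length := by
  induction l generalizing p with
  | nil => simp [lin]
  | cons v t ih =>
      simp only [lin, blockOf, List.length_append, List.length_cons]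
      have := ih v
      omega

lemma lin_nil (p q : ℕ) : lin p [] q = [] := rfl

lemma lin_cons (p v q : ℕ) (t : List ℕ) :
    lin p (v :: t) q = blockOf p v (t.headD q) ++ lin v t q := rfl

lemma lin_congr (l : List ℕ) {p p' q q' : ℕ} (hp : 2 ≤ p ↔ 2 ≤ p') (hq : 2 ≤ q ↔ 2 ≤ q') :
    lin p l q = lin p' l q' := by
  induction l generalizing p p' with
  | nil => rfl
  | cons v t ih =>
      rw [lin_cons, lin_cons]
      cases t with
      | nil =>
          simp only [List.headD, lin_nil, blockOf]
          rw [inc_congr hp Iff.rfl, inc_congr Iff.rfl hq, ins_congr Iff.rfl hq]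
      | cons u t' =>
          simp only [List.headD, blockOf]
          rw [inc_congr hp Iff.rfl, ih Iff.rfl]

lemma getLastD_irrel {l : List ℕ} (h : l ≠ []) (d d' : ℕ) : l.getLastD d = l.getLastD d' := by
  cases l with
  | nil => exact absurd rfl h
  | cons v t => rw [List.getLastD_cons, List.getLastD_cons]

lemma lin_append (A : List ℕ) (p v q : ℕ) (h : A ≠ []) :
    lin p (A ++ [v]) q = lin p A v ++ blockOf (A.getLastD 0) v q := by
  induction A generalizing p with
  | nil => exact absurd rfl h
  | cons a A' ih =>
      cases A' with
      | nil => simp [lin, List.getLastD_cons]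
      | cons a2 A'' =>
          have h2 : (a2 :: A'') ≠ [] := by simp
          rw [List.cons_append, lin_cons, ih a h2]
          simp [lin_cons, List.getLastD_cons, List.cons_append, List.append_assoc]


lemma getLastD_concat' (X : List ℕ) (a d : ℕ) : (X ++ [a]).getLastD d = a := by
  induction X generalizing d with
  | nil => rfl
  | cons x X' ih => rw [List.cons_append, List.getLastD_cons]; exact ih x

lemma getLastD_reverse (l : List ℕ) (d : ℕ) : l.reverse.getLastD d = l.headD d := by
  cases l with
  | nil => rfl
  | cons v t => rw [List.reverse_cons, getLastD_concat', List.headD_cons]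

lemma ins_block (u v q : ℕ) : ins u v ++ blockOf u v q = (blockOf q v u).reverse ++ ins v q := by
  have hval : v + inc u v + inc v q = v + inc q v + inc v u := by
    rw [inc_comm q v, inc_comm v u]; omega
  simp only [blockOf, List.reverse_cons, ins_reverse, hval, ins_comm u v,
    List.append_assoc, List.singleton_append]

lemma lin_reverse (l : List ℕ) (h : l ≠ []) : ∀ p q,
    ins (l.getLastD 0) p ++ lin p l.reverse q = (lin q l p).reverse ++ ins (l.headD 0) q := by
  induction l with
  | nil => exact absurd rfl h
  | cons v t ih =>
    intro p q
    cases t with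
    | nil =>
        have : ins v p ++ blockOf p v q = (blockOf q v p).reverse ++ ins v q := by
          rw [ins_comm v p, ins_block p v q]
        simpa [lin_cons, lin_nil, blockOf] using this
    | cons u t' =>
        have ht : (u :: t') ≠ [] := by simp
        have hrevne : (u :: t').reverse ≠ [] := by simp
        conv_rhs => rw [lin_cons, List.headD_cons, List.reverse_append]
        rw [List.getLastD_cons, getLastD_irrel ht v 0, List.reverse_cons,
          lin_append _ _ _ _ hrevne, getLastD_reverse, List.headD_cons,
          ← List.append_assoc, ih ht p v, List.headD_cons]
        rw [List.append_assoc, ins_block, List.headD_cons]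
        simp [List.append_assoc]


lemma nf_nil : nf [] = [] := rfl
lemma nf_cons (v : ℕ) (t : List ℕ) : nf (v :: t) = lin (t.getLastD v) (v :: t) v := rfl

lemma headD_reverse (l : List ℕ) (d : ℕ) : l.reverse.headD d = l.getLastD d := by
  have := getLastD_reverse l.reverse d
  rw [List.reverse_reverse] at this
  exact this.symm

lemma nf_eq (c : List ℕ) (h : c ≠ []) : nf c = lin (c.getLastD 0) c (c.headD 0) := by
  cases c with
  | nil => exact absurd rfl h
  | cons v t => rw [nf_cons, List.getLastD_cons, List.headD_cons]

lemma rotate_append_len (A B : List ℕ) : (A ++ B).rotate A.length = B ++ A := by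
  rw [List.rotate_eq_drop_append_take (by simp), List.drop_left, List.take_left]

lemma nf_rotate (c : List ℕ) : ∃ k, nf (c.rotate 1) = (nf c).rotate k := by
  match c with
  | [] => exact ⟨0, by simp⟩
  | [v] => exact ⟨0, by simp⟩
  | v :: u :: t' =>
      refine ⟨(blockOf ((u :: t').getLastD 0) v u).length, ?_⟩
      conv_rhs => rw [nf_cons, getLastD_irrel (by simp : (u :: t') ≠ []) v 0,
        lin_cons, List.headD_cons, rotate_append_len]
      conv_lhs => rw [List.rotate_cons_succ, List.rotate_zero, List.cons_append, nf_cons,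
        getLastD_concat', ← List.cons_append,
        lin_append _ _ _ _ (by simp : (u :: t') ≠ [])]

lemma nf_reverse (c : List ℕ) : ∃ k, nf c.reverse = ((nf c).reverse).rotate k := by
  rcases eq_or_ne c [] with rfl | h
  · exact ⟨0, by simp [nf_nil]⟩
  have h2 : c.reverse ≠ [] := by simpa
  have key := lin_reverse c h (c.headD 0) (c.getLastD 0)
  rw [ins_comm (c.headD 0) (c.getLastD 0)] at key
  have e1 : nf c.reverse = lin (c.headD 0) c.reverse (c.getLastD 0) := by
    rw [nf_eq c.reverse h2, getLastD_reverse, headD_reverse]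
  have e2 : nf c = lin (c.getLastD 0) c (c.headD 0) := nf_eq c h
  rw [← e1, ← e2] at key
  by_cases hbb : 2 ≤ c.getLastD 0 ∧ 2 ≤ c.headD 0
  · rw [ins, if_pos hbb] at key
    rcases hM : (nf c).reverse with _ | ⟨m, Y⟩
    · rw [hM] at key
      simp only [List.nil_append, List.singleton_append] at key
      refine ⟨1, ?_⟩
      simp only [List.cons.injEq] at key
      simp [key.2, hM]
    · rw [hM] at key
      refine ⟨1, ?_⟩
      rw [List.rotate_cons_succ, List.rotate_zero]
      simp only [List.singleton_append, List.cons_append] at key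
      injection key with k1 k2
      simp only [List.nil_append] at k2
      rw [k2, ← k1]
  · rw [ins, if_neg hbb] at key
    simp only [List.nil_append, List.append_nil] at key
    exact ⟨0, by rw [List.rotate_zero]; exact key⟩

lemma nf_step (a b : ℕ) (t : List ℕ) :
    nf ((a + 2) :: (b + 2) :: t) = nf ((a + 3) :: 1 :: (b + 3) :: t) := by
  have p1 : 2 ≤ a + 2 := by omega
  have p2 : 2 ≤ b + 2 := by omega
  have p3 : 2 ≤ a + 3 := by omega
  have p4 : 2 ≤ b + 3 := by omega
  have n1 : ¬ (2:ℕ) ≤ 1 := by omega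
  cases t with
  | nil =>
      simp [nf_cons, lin_cons, lin_nil, blockOf, inc, ins, p1, p2, p3, p4, n1,
        List.getLastD_cons]
      try omega
  | cons u t'' =>
      have hX : (2 ≤ t''.headD (a + 2)) ↔ (2 ≤ t''.headD (a + 3)) := by
        cases t'' <;> simp [List.headD] <;> omega
      have e1 : inc (b + 3) u = inc (b + 2) u := inc_congr (by omega) Iff.rfl
      have e2 : inc u (t''.headD (a + 3)) = inc u (t''.headD (a + 2)) :=
        inc_congr Iff.rfl hX.symm
      have e3 : ins u (t''.headD (a + 3)) = ins u (t''.headD (a + 2)) :=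
        ins_congr Iff.rfl hX.symm
      have e4 : lin u t'' (a + 3) = lin u t'' (a + 2) := lin_congr _ Iff.rfl (by omega)
      have e5 : inc (t''.getLastD u) (a + 3) = inc (t''.getLastD u) (a + 2) :=
        inc_congr Iff.rfl (by omega)
      rw [nf_cons, nf_cons]
      simp only [List.getLastD_cons, lin_cons, List.headD_cons, blockOf, e1, e2, e3, e4, e5]
      by_cases hG : 2 ≤ t''.getLastD u <;>
      by_cases hu : 2 ≤ u <;>
      by_cases hH : 2 ≤ t''.headD (a + 2) <;>
      · simp [inc, ins, p1, p2, p3, p4, n1, hG, hu, hH]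
        try omega

lemma dih_rotate (c : List ℕ) (k : ℕ) : DihEquiv c (c.rotate k) := by
  induction k with
  | zero => rw [List.rotate_zero]; exact Relation.EqvGen.refl c
  | succ k ih =>
      refine Relation.EqvGen.trans _ _ _ ih (Relation.EqvGen.rel _ _ (Or.inl ?_))
      rw [List.rotate_rotate]

lemma dih_reverse (c : List ℕ) : DihEquiv c c.reverse :=
  Relation.EqvGen.rel _ _ (Or.inr rfl)

lemma dih_length {a b : List ℕ} (h : DihEquiv a b) : a.length = b.length := by
  induction h with
  | rel x y hxy => rcases hxy with h | h <;> subst h <;> simp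
  | refl => rfl
  | symm _ _ _ ih => omega
  | trans _ _ _ _ _ ih1 ih2 => omega


lemma inc_eq_zero {a b : ℕ} (h : ¬(2 ≤ a ∧ 2 ≤ b)) : inc a b = 0 := if_neg h
lemma ins_eq_nil {a b : ℕ} (h : ¬(2 ≤ a ∧ 2 ≤ b)) : ins a b = [] := if_neg h
lemma inc_eq_one {a b : ℕ} (h : 2 ≤ a ∧ 2 ≤ b) : inc a b = 1 := if_pos h
lemma ins_eq_one {a b : ℕ} (h : 2 ≤ a ∧ 2 ≤ b) : ins a b = [1] := if_pos h

def noBB (a b : ℕ) : Prop := ¬(2 ≤ a ∧ 2 ≤ b)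
def no11 (a b : ℕ) : Prop := ¬(a = 1 ∧ b = 1)

lemma lin_id (l : List ℕ) : ∀ p q, List.Chain' noBB (p :: (l ++ [q])) → lin p l q = l := by
  induction l with
  | nil => intro p q _; rfl
  | cons v t ih =>
    intro p q hch
    rw [List.cons_append] at hch
    have h1 : noBB p v := (List.isChain_cons_cons.mp hch).1
    have hch2 : List.Chain' noBB (v :: (t ++ [q])) := (List.isChain_cons_cons.mp hch).2
    have h2 : noBB v (t.headD q) := by
      cases t with
      | nil => exact (List.isChain_cons_cons.mp hch2).1
      | cons u t' => exact (List.isChain_cons_cons.mp (by rwa [List.cons_append] at hch2)).1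
    rw [lin_cons, ih v q hch2, blockOf, inc_eq_zero h1, inc_eq_zero h2, ins_eq_nil h2]
    simp

lemma lin_chain (l : List ℕ) : ∀ p q w, (2 ≤ w → 2 ≤ q) →
    List.Chain' noBB (lin p l q ++ [w]) := by
  induction l with
  | nil => intro p q w _; simp [lin_nil]; exact List.isChain_singleton w
  | cons v t ih =>
    intro p q w hw
    rw [lin_cons, blockOf]
    by_cases hbb : 2 ≤ v ∧ 2 ≤ t.headD q
    · rw [ins_eq_one hbb]
      have hc := ih v q w hw
      simp only [List.cons_append, List.append_assoc, List.singleton_append]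
      refine List.isChain_cons_cons.mpr ⟨?_, List.isChain_cons.mpr ⟨?_, hc⟩⟩
      · intro hcon; omega
      · intro y _ hcon; omega
    · rw [ins_eq_nil hbb]
      simp only [List.cons_append, List.nil_append]
      refine List.isChain_cons.mpr ⟨?_, ih v q w hw⟩
      intro y hy hcon
      cases t with
      | nil =>
          simp [lin_nil] at hy
          subst hy
          exact hbb ⟨(two_le_block _ _ _).mp hcon.1, hw hcon.2⟩
      | cons u t' =>
          rw [lin_cons, blockOf] at hy
          simp only [List.cons_append, List.head?_cons, Option.mem_def,
            Option.some.injEq] at hy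
          subst hy
          exact hbb ⟨(two_le_block _ _ _).mp hcon.1,
            by simpa using (two_le_block _ _ _).mp hcon.2⟩

def IPr (R : ℕ → ℕ → Prop) (l : List ℕ) : Prop :=
  ∀ i (h : i < l.length),
    R (l[i]) (l[(i + 1) % l.length]'(Nat.mod_lt _ (Nat.lt_of_le_of_lt (Nat.zero_le i) h)))

lemma getLastD_eq_getElem (l : List ℕ) (d : ℕ) (h : l ≠ []) :
    l.getLastD d = l[l.length - 1]'(Nat.sub_lt (List.length_pos_iff.mpr h) one_pos) := by
  rw [List.getLastD_eq_getLast?, List.getLast?_eq_getElem?,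
    List.getElem?_eq_getElem (Nat.sub_lt (List.length_pos_iff.mpr h) one_pos)]
  rfl

lemma headD_eq_getElem (l : List ℕ) (d : ℕ) (h : l ≠ []) :
    l.headD d = l[0]'(List.length_pos_iff.mpr h) := by
  cases l with
  | nil => exact absurd rfl h
  | cons v t => rfl

lemma IPr.chain' {R : ℕ → ℕ → Prop} {l : List ℕ} (h : IPr R l) : List.Chain' R l := by
  apply List.isChain_iff_getElem.mpr
  intro i hi
  have hn : i < l.length := by omega
  have hmod : (i + 1) % l.length = i + 1 := Nat.mod_eq_of_lt (by omega)
  have := h i hn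
  simp only [hmod] at this
  simpa using this

lemma IPr.wrap {R : ℕ → ℕ → Prop} {l : List ℕ} (h : IPr R l) (hne : l ≠ []) :
    R (l.getLastD 0) (l.headD 0) := by
  have hpos : 0 < l.length := List.length_pos_iff.mpr hne
  have := h (l.length - 1) (by omega)
  have hmod : (l.length - 1 + 1) % l.length = 0 := by
    have : l.length - 1 + 1 = l.length := by omega
    rw [this, Nat.mod_self]
  simp only [hmod] at this
  rw [getLastD_eq_getElem l 0 hne, headD_eq_getElem l 0 hne]
  exact this

lemma IPr.of_chain' {R : ℕ → ℕ → Prop} {l : List ℕ} (hc : List.Chain' R l)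
    (hw : l ≠ [] → R (l.getLastD 0) (l.headD 0)) : IPr R l := by
  intro i hi
  have hne : l ≠ [] := by intro hn; subst hn; simp at hi
  rcases lt_or_ge (i + 1) l.length with hlt | hge
  · have hmod : (i + 1) % l.length = i + 1 := Nat.mod_eq_of_lt hlt
    have := List.isChain_iff_getElem.mp hc i (by omega)
    simp only [hmod]
    simpa using this
  · have hieq : i = l.length - 1 := by omega
    have hmod : (i + 1) % l.length = 0 := by
      have : i + 1 = l.length := by omega
      rw [this, Nat.mod_self]
    have := hw hne
    rw [getLastD_eq_getElem l 0 hne, headD_eq_getElem l 0 hne] at this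
    simp only [hmod]
    subst hieq
    exact this


lemma getLast?_eq_getLastD {l : List ℕ} (h : l ≠ []) : l.getLast? = some (l.getLastD 0) := by
  rw [List.getLastD_eq_getLast?, List.getLast?_eq_getElem?,
    List.getElem?_eq_getElem (Nat.sub_lt (List.length_pos_iff.mpr h) one_pos)]
  rfl

lemma IPr.rot1 {R : ℕ → ℕ → Prop} {l : List ℕ} (h : IPr R l) : IPr R (l.rotate 1) := by
  intro i hi
  have hlen : (l.rotate 1).length = l.length := by simp
  have hi' : i < l.length := by omega
  have hj : (i + 1) % l.length < l.length :=
    Nat.mod_lt _ (by omega)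
  have key := h ((i + 1) % l.length) hj
  simp only [List.getElem_rotate, hlen]
  exact key

lemma IPr.rev {R : ℕ → ℕ → Prop} (hsym : ∀ a b, R a b → R b a) {l : List ℕ}
    (h : IPr R l) : IPr R l.reverse := by
  intro i hi
  have hlen : l.reverse.length = l.length := by simp
  have hi' : i < l.length := by omega
  simp only [List.getElem_reverse, hlen]
  rcases eq_or_lt_of_le (Nat.succ_le_of_lt hi') with heq | hlt
  · -- i + 1 = l.length
    have h1 : (i + 1) % l.length = 0 := by
      rw [show i + 1 = l.length by omega]; exact Nat.mod_self _
    have h2 : l.length - 1 - i = 0 := by omega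
    have key := h (l.length - 1) (by omega)
    have h3 : (l.length - 1 + 1) % l.length = 0 := by
      rw [show l.length - 1 + 1 = l.length by omega, Nat.mod_self]
    simp only [h3] at key
    simp only [h1, h2, Nat.sub_zero]
    exact hsym _ _ key
  · have h1 : (i + 1) % l.length = i + 1 := Nat.mod_eq_of_lt hlt
    have key := h (l.length - 1 - (i + 1)) (by omega)
    have h3 : (l.length - 1 - (i + 1) + 1) % l.length = l.length - 1 - i := by
      rw [show l.length - 1 - (i + 1) + 1 = l.length - 1 - i by omega]
      exact Nat.mod_eq_of_lt (by omega)
    simp only [h3] at key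
    simp only [h1]
    exact hsym _ _ key

lemma nf_id {c : List ℕ} (h : IPr noBB c) : nf c = c := by
  cases c with
  | nil => rfl
  | cons v t =>
    have hne : (v :: t) ≠ [] := by simp
    have hwrap : noBB ((v :: t).getLastD 0) v := by
      have := h.wrap hne
      rwa [headD_eq_getElem _ _ hne] at this
    rw [nf_cons]
    apply lin_id
    refine List.isChain_cons.mpr ⟨?_, ?_⟩
    · intro y hy
      simp only [List.cons_append, List.head?_cons, Option.mem_def, Option.some.injEq] at hy
      subst hy
      rwa [← List.getLastD_cons]
    · refine List.isChain_append.mpr ⟨h.chain', List.isChain_singleton v, ?_⟩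
      intro x hx y hy
      rw [getLast?_eq_getLastD hne, Option.mem_def, Option.some.injEq] at hx
      simp only [List.head?_cons, Option.mem_def, Option.some.injEq] at hy
      subst hx; subst hy
      exact hwrap

lemma nf_IPr (c : List ℕ) : IPr noBB (nf c) := by
  cases c with
  | nil => intro i hi; simp [nf_nil] at hi
  | cons v t =>
    set gl := t.getLastD v with hgl
    set w := v + inc gl v + inc v (t.headD v) with hw
    have hnf : nf (v :: t) = w :: (ins v (t.headD v) ++ lin v t v) := by
      rw [nf_cons, lin_cons, blockOf, ← hgl, ← hw, List.cons_append]
    have hne : nf (v :: t) ≠ [] := by rw [hnf]; simp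
    have hch : List.Chain' noBB (lin gl (v :: t) v ++ [w]) :=
      lin_chain (v :: t) gl v w (fun h2w => (two_le_block gl v (t.headD v)).mp (hw ▸ h2w))
    rw [← nf_cons] at hch
    obtain ⟨hch1, -, hlink⟩ := List.isChain_append.mp hch
    apply IPr.of_chain' hch1
    intro _
    rw [headD_eq_getElem _ _ hne, ← headD_eq_getElem _ 0 hne]
    have : (nf (v :: t)).headD 0 = w := by rw [hnf]; rfl
    rw [this]
    exact hlink _ (by rw [getLast?_eq_getLastD hne]; rfl) w (by simp)


open Relation

lemma cyc_exact {a b : List ℕ} (h : cyc a = cyc b) : DihEquiv a b := Quotient.exact h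

def nuF : Cyc → Cyc := Quotient.lift (fun c => cyc (nf c)) (by
  intro a b hab
  induction hab with
  | rel x y hxy =>
      rcases hxy with h | h
      · subst h
        show cyc (nf x) = cyc (nf (x.rotate 1))
        obtain ⟨k, hk⟩ := nf_rotate x
        rw [hk]
        exact Quotient.sound (dih_rotate (nf x) k)
      · subst h
        show cyc (nf x) = cyc (nf x.reverse)
        obtain ⟨k, hk⟩ := nf_reverse x
        rw [hk]
        exact Quotient.sound (Relation.EqvGen.trans _ _ _ (dih_reverse (nf x))
          (dih_rotate (nf x).reverse k))
  | refl x => rfl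
  | symm x y _ ih => exact ih.symm
  | trans x y z _ _ ih1 ih2 => exact ih1.trans ih2)

def lenC : Cyc → ℕ := Quotient.lift List.length (fun _ _ hab => dih_length hab)

lemma lenC_cyc (c : List ℕ) : lenC (cyc c) = c.length := rfl
lemma nuF_cyc (c : List ℕ) : nuF (cyc c) = cyc (nf c) := rfl

lemma nu_step {x y : Cyc} (h : deltaStep x y) : nuF x = nuF y := by
  obtain ⟨a, b, t, hx, hy⟩ := h
  rw [hx, hy, nuF_cyc, nuF_cyc, nf_step]

lemma nu_rtg {x y : Cyc} (h : ReflTransGen deltaStep x y) : nuF x = nuF y := by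
  induction h with
  | refl => rfl
  | tail _ hstep ih => exact ih.trans (nu_step hstep)

lemma lenC_step {x y : Cyc} (h : deltaStep x y) : lenC y = lenC x + 1 := by
  obtain ⟨a, b, t, hx, hy⟩ := h
  rw [hx, hy, lenC_cyc, lenC_cyc]
  simp

lemma lenC_rtg {x y : Cyc} (h : ReflTransGen deltaStep x y) : lenC x ≤ lenC y := by
  induction h with
  | refl => exact le_refl _
  | tail _ hstep ih => have := lenC_step hstep; omega

lemma lenC_nu_gt {x y : Cyc} (h : deltaStep x y) : lenC x < lenC (nuF x) := by
  obtain ⟨a, b, t, hx, _⟩ := h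
  rw [hx, nuF_cyc, lenC_cyc, lenC_cyc]
  rw [nf_cons, lin_cons, blockOf, List.headD_cons,
    ins_eq_one ⟨by omega, by omega⟩]
  have := lin_length (a + 2) (a + 2) ((b + 2) :: t)
  simp only [List.length_append, List.length_cons, List.cons_append, List.length_cons] at *
  omega

lemma exists_redex {e : List ℕ} (hlen : 2 ≤ e.length) (h : ¬ IPr noBB e) :
    ∃ z, deltaStep (cyc e) z := by
  unfold IPr at h
  push_neg at h
  obtain ⟨i, hi, hbb⟩ := h
  rw [noBB, not_not] at hbb
  have hlr : (e.rotate i).length = e.length := by simp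
  obtain ⟨x, y, t, hr⟩ : ∃ x y t, e.rotate i = x :: y :: t := by
    rcases hrr : e.rotate i with _ | ⟨x, _ | ⟨y, t⟩⟩
    · rw [hrr] at hlr; simp at hlr; omega
    · rw [hrr] at hlr; simp at hlr; omega
    · exact ⟨_, _, _, rfl⟩
  have hx2 : 2 ≤ x := by
    have hv := List.getElem_rotate e i 0 (by rw [hlr]; omega)
    simp only [hr, List.getElem_cons_zero, Nat.zero_add, Nat.mod_eq_of_lt hi] at hv
    rw [hv]; exact hbb.1
  have hy2 : 2 ≤ y := by
    have hv := List.getElem_rotate e i 1 (by rw [hlr]; omega)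
    simp only [hr, List.getElem_cons_succ, List.getElem_cons_zero, Nat.add_comm 1 i] at hv
    rw [hv]; exact hbb.2
  refine ⟨cyc ((x - 2 + 3) :: 1 :: (y - 2 + 3) :: t), x - 2, y - 2, t, ?_, rfl⟩
  have hxx : x - 2 + 2 = x := by omega
  have hyy : y - 2 + 2 = y := by omega
  rw [hxx, hyy, ← hr]
  exact Quotient.sound (dih_rotate e i)

lemma exists_terminal : ∀ (n : ℕ) (y : Cyc), lenC (nuF y) - lenC y ≤ n →
    ∃ y', ReflTransGen deltaStep y y' ∧ ∀ z, ¬ deltaStep y' z := by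
  intro n
  induction n with
  | zero =>
      intro y hy
      by_cases ht : ∃ z, deltaStep y z
      · obtain ⟨z, hz⟩ := ht
        have := lenC_nu_gt hz
        omega
      · exact ⟨y, ReflTransGen.refl, not_exists.mp ht⟩
  | succ n ih =>
      intro y hy
      by_cases ht : ∃ z, deltaStep y z
      · obtain ⟨z, hz⟩ := ht
        have h1 : nuF z = nuF y := (nu_step hz).symm
        have h2 : lenC z = lenC y + 1 := lenC_step hz
        have h3 : lenC y < lenC (nuF y) := lenC_nu_gt hz
        obtain ⟨y', hrtg, hterm⟩ := ih z (by rw [h1]; omega)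
        exact ⟨y', ReflTransGen.head hz hrtg, hterm⟩
      · exact ⟨y, ReflTransGen.refl, not_exists.mp ht⟩

lemma terminal_fixed {y : Cyc} (hterm : ∀ z, ¬ deltaStep y z) (hlen : 2 ≤ lenC y) :
    nuF y = y := by
  obtain ⟨e, rfl⟩ := Quotient.exists_rep y
  have hIP : IPr noBB e := by
    by_contra hn
    obtain ⟨z, hz⟩ := exists_redex hlen hn
    exact hterm z hz
  show cyc (nf e) = _
  rw [nf_id hIP]
  rfl


lemma quiddity_rotate {c : List ℕ} (h : IsQuiddity c) (k : ℕ) : IsQuiddity (c.rotate k) := by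
  induction k with
  | zero => rw [List.rotate_zero]; exact h
  | succ k ih => exact ih.dih (Or.inl (List.rotate_rotate c k 1).symm)

lemma quiddity_dih {a b : List ℕ} (hab : DihEquiv a b) : IsQuiddity a ↔ IsQuiddity b := by
  induction hab with
  | rel x y hxy =>
      constructor
      · intro hq; exact hq.dih hxy
      · intro hq
        rcases hxy with h | h
        · subst h
          rcases eq_or_ne x [] with rfl | hne
          · simpa using hq
          · have := quiddity_rotate hq (x.length - 1)
            rwa [List.rotate_rotate, show 1 + (x.length - 1) = x.length by
              have := List.length_pos_iff.mpr hne; omega, List.rotate_length] at this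
        · subst h
          have := hq.dih (Or.inr rfl)
          rwa [List.reverse_reverse] at this
  | refl x => exact Iff.rfl
  | symm x y _ ih => exact ih.symm
  | trans x y z _ _ ih1 ih2 => exact ih1.trans ih2

lemma quiddity_len2 {c : List ℕ} (h : IsQuiddity c) : 2 ≤ c.length := by
  induction h with
  | base => simp
  | dih _ hstep ih => rcases hstep with h | h <;> subst h <;> simpa
  | grow _ ih => simp only [List.length_cons] at *; omega

lemma quiddity_eq2 {c : List ℕ} (h : IsQuiddity c) : c.length = 2 → c = [0, 0] := by
  induction h with
  | base => intro _; rfl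
  | dih _ hstep ih =>
      intro hl
      rcases hstep with h | h <;> subst h
      · rw [ih (by simpa using hl)]; decide
      · rw [ih (by simpa using hl)]; decide
  | grow hq ih => intro hl; simp at hl
  
lemma quiddity_eq3 {c : List ℕ} (h : IsQuiddity c) : c.length = 3 → c = [1, 1, 1] := by
  induction h with
  | base => intro hl; simp at hl
  | dih _ hstep ih =>
      intro hl
      rcases hstep with h | h <;> subst h
      · rw [ih (by simpa using hl)]; decide
      · rw [ih (by simpa using hl)]; decide
  | grow hq ih =>
      rename_i a b t
      intro hl
      simp only [List.length_cons] at hl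
      have ht : t = [] := by
        cases t
        · rfl
        · simp at hl
      subst ht
      have := quiddity_eq2 hq rfl
      obtain ⟨rfl, rfl, -⟩ : a = 0 ∧ b = 0 ∧ True := by simpa using this
      rfl

lemma quiddity_ge1 {c : List ℕ} (h : IsQuiddity c) : c = [0, 0] ∨ ∀ x ∈ c, 1 ≤ x := by
  induction h with
  | base => left; rfl
  | dih _ hstep ih =>
      rcases ih with h00 | hge
      · subst h00; left; rcases hstep with h | h <;> subst h <;> decide
      · right; intro x hx
        rcases hstep with h | h <;> subst h
        · exact hge x (by rwa [List.mem_rotate] at hx)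
        · exact hge x (by rwa [List.mem_reverse] at hx)
  | grow hq ih =>
      rename_i a b t
      right
      rcases ih with h00 | hge
      · obtain ⟨rfl, rfl, rfl⟩ : a = 0 ∧ b = 0 ∧ t = [] := by simpa using h00
        intro x hx
        simp only [List.mem_cons] at hx
        rcases hx with rfl | rfl | rfl | hx
        · omega
        · omega
        · omega
        · simp at hx
      · intro x hx
        simp only [List.mem_cons] at hx
        rcases hx with rfl | rfl | rfl | hx
        · have := hge a (by simp); omega
        · omega
        · have := hge b (by simp); omega
        · exact hge x (by simp [hx])

lemma no11_symm : ∀ a b : ℕ, no11 a b → no11 b a := by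
  intro a b h; unfold no11 at *; tauto

lemma quiddity_no11 {c : List ℕ} (h : IsQuiddity c) :
    c = [0, 0] ∨ c = [1, 1, 1] ∨ IPr no11 c := by
  induction h with
  | base => left; rfl
  | dih _ hstep ih =>
      rcases ih with h | h | h
      · subst h; rcases hstep with hs | hs <;> subst hs <;> left <;> decide
      · subst h; rcases hstep with hs | hs <;> subst hs <;> (right; left) <;> decide
      · right; right
        rcases hstep with hs | hs <;> subst hs
        · exact h.rot1
        · exact h.rev no11_symm
  | grow hq ih =>
      rename_i a b t
      rcases quiddity_ge1 hq with h00 | hge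
      · obtain ⟨rfl, rfl, rfl⟩ : a = 0 ∧ b = 0 ∧ t = [] := by simpa using h00
        right; left; rfl
      · right; right
        have ha : 1 ≤ a := hge a (by simp)
        have hb : 1 ≤ b := hge b (by simp)
        have hchaint : List.Chain' no11 t := by
          rcases ih with h | h | h
          · injection h with h1 _; omega
          · obtain ⟨rfl, rfl, rfl⟩ : a = 1 ∧ b = 1 ∧ t = [1] := by simpa using h
            exact List.isChain_singleton 1
          · exact h.chain'.tail.tail
        apply IPr.of_chain'
        · refine List.isChain_cons_cons.mpr ⟨by unfold no11; omega,
            List.isChain_cons_cons.mpr ⟨by unfold no11; omega,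
            List.isChain_cons.mpr ⟨?_, ?_⟩⟩⟩
          · intro y _; unfold no11; omega
          · exact hchaint
        · intro _
          rw [List.headD_cons]
          unfold no11
          intro hcon
          omega


lemma nf_length_ge (c : List ℕ) : c.length ≤ (nf c).length := by
  cases c with
  | nil => simp [nf_nil]
  | cons v t => rw [nf_cons]; exact lin_length _ _ _

lemma alt_count {l : List ℕ} (h1 : ∀ x ∈ l, 1 ≤ x) (h11 : IPr no11 l) (hBB : IPr noBB l) :
    Even l.length ∧ l.count 1 = l.length / 2 := by
  have hrl : (l.rotate 1).length = l.length := by simp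
  have hzl : (l.zip (l.rotate 1)).length = l.length := by simp
  have hpt : ∀ p ∈ l.zip (l.rotate 1),
      ((fun (p : ℕ × ℕ) => p.1 == 1) p = true ↔ (fun (p : ℕ × ℕ) => decide (2 ≤ p.2)) p = true) := by
    intro p hp
    obtain ⟨i, hi, hip⟩ := List.mem_iff_getElem.mp hp
    rw [hzl] at hi
    rw [List.getElem_zip, List.getElem_rotate] at hip
    subst hip
    simp only [beq_iff_eq, decide_eq_true_eq]
    have ha := h11 i hi
    have hbb := hBB i hi
    have hmem1 := h1 _ (List.getElem_mem (show i < l.length by omega))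
    have hmem2 := h1 _ (List.getElem_mem
      (show (i + 1) % l.length < l.length from Nat.mod_lt _ (by omega)))
    unfold no11 at ha
    unfold noBB at hbb
    constructor
    · intro he
      by_contra hcon
      exact ha ⟨he, by omega⟩
    · intro h2
      by_contra hcon
      exact hbb ⟨by omega, h2⟩
  have e1 : l.count 1 = (l.zip (l.rotate 1)).countP (fun p => p.1 == 1) := by
    rw [List.count_eq_countP]
    conv_lhs => rw [← List.map_fst_zip (l₁ := l) (l₂ := l.rotate 1) (by simp)]
    rw [List.countP_map]
    rfl
  have e2 : l.countP (fun x => decide (2 ≤ x)) =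
      (l.zip (l.rotate 1)).countP (fun p => decide (2 ≤ p.2)) := by
    rw [← (List.rotate_perm l 1).countP_eq]
    conv_lhs => rw [← List.map_snd_zip (l₁ := l) (l₂ := l.rotate 1) (by simp)]
    rw [List.countP_map]
    rfl
  have e3 := List.countP_congr hpt
  have e4 := List.length_eq_countP_add_countP (fun x : ℕ => x == 1) (l := l)
  have e5 : l.countP (fun a : ℕ => decide ¬((a == 1) = true)) =
      l.countP (fun x => decide (2 ≤ x)) := by
    apply List.countP_congr
    intro x hx
    have := h1 x hx
    simp only [beq_iff_eq, decide_eq_true_eq, decide_not]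
    constructor
    · intro hne
      simp only [Bool.not_eq_true', decide_eq_false_iff_not] at hne
      omega
    · intro h2
      simp only [Bool.not_eq_true', decide_eq_false_iff_not]
      omega
  have htot : l.count 1 + l.count 1 = l.length := by
    have hA : l.count 1 = l.countP (fun a : ℕ => decide ¬((a == 1) = true)) := by
      rw [e1, e3, ← e2, ← e5]
    have hB : l.count 1 = l.countP (fun x : ℕ => x == 1) := List.count_eq_countP (a := 1) (l := l)
    omega
  constructor
  · exact ⟨l.count 1, by omega⟩
  · omega

lemma terminal_rtg_eq {y y' : Cyc} (hterm : ∀ z, ¬ deltaStep y z)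
    (h : ReflTransGen deltaStep y y') : y = y' := by
  rcases Relation.ReflTransGen.cases_head h with rfl | ⟨z, hz, _⟩
  · rfl
  · exact absurd hz (hterm z)

lemma quiddity_rtg {u v : Cyc} (h : ReflTransGen deltaStep u v) :
    (∃ q, IsQuiddity q ∧ u = cyc q) → ∃ q, IsQuiddity q ∧ v = cyc q := by
  induction h with
  | refl => exact id
  | tail _ hstep ih =>
      intro hu
      obtain ⟨q, hq, rfl⟩ := ih hu
      obtain ⟨a, b, t, h1, h2⟩ := hstep
      have hdq : DihEquiv q ((a + 2) :: (b + 2) :: t) := cyc_exact h1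
      have hq2 : IsQuiddity ((a + 2) :: (b + 2) :: t) := (quiddity_dih hdq).mp hq
      have hg := hq2.grow
      refine ⟨(a + 3) :: 1 :: (b + 3) :: t, ?_, h2⟩
      have e1 : a + 2 + 1 = a + 3 := by omega
      have e2 : b + 2 + 1 = b + 3 := by omega
      rwa [e1, e2] at hg

end DW


/-- For every quiddity cycle `c` other than `(0,0)` and `(1,1,1)`, the rewriting
process defining `δ` terminates at `c` with a result independent of the order of
rule applications, and the result `δ(c)` lies in `𝒜'`. -/
theorem delta_well_defined (c : List ℕ) (hc : IsQuiddity c)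
    (h0 : ¬ DihEquiv c [0, 0]) (h1 : ¬ DihEquiv c [1, 1, 1]) :
    ∃ x : Cyc, DeltaEval (cyc c) x ∧
      (∀ y : Cyc, Relation.ReflTransGen deltaStep (cyc c) y →
        Relation.ReflTransGen deltaStep y x) ∧
      (∀ y : Cyc, DeltaEval (cyc c) y → y = x) ∧
      x ∈ QuiddityCyc' := by
  classical
  have hlen2 : 2 ≤ c.length := DW.quiddity_len2 hc
  have hlen4 : 4 ≤ c.length := by
    rcases (by omega : c.length = 2 ∨ c.length = 3 ∨ 4 ≤ c.length) with h | h | h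
    · exact absurd (by rw [DW.quiddity_eq2 hc h]; exact Relation.EqvGen.refl _) h0
    · exact absurd (by rw [DW.quiddity_eq3 hc h]; exact Relation.EqvGen.refl _) h1
    · exact h
  have key : ∀ y : Cyc, Relation.ReflTransGen deltaStep (cyc c) y →
      ∃ y', Relation.ReflTransGen deltaStep y y' ∧ (∀ z, ¬ deltaStep y' z) ∧
        y' = cyc (DW.nf c) := by
    intro y hy
    obtain ⟨y', hrtg, hterm⟩ :=
      DW.exists_terminal (DW.lenC (DW.nuF y) - DW.lenC y) y le_rfl
    refine ⟨y', hrtg, hterm, ?_⟩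
    have hleny' : 2 ≤ DW.lenC y' := by
      have l1 : DW.lenC (cyc c) ≤ DW.lenC y := DW.lenC_rtg hy
      have l2 : DW.lenC y ≤ DW.lenC y' := DW.lenC_rtg hrtg
      have l3 : DW.lenC (cyc c) = c.length := rfl
      omega
    have hfix : DW.nuF y' = y' := DW.terminal_fixed hterm hleny'
    have hnueq : DW.nuF y' = DW.nuF (cyc c) := (DW.nu_rtg (hy.trans hrtg)).symm
    rw [← hfix, hnueq]
    rfl
  obtain ⟨x0, hrtg0, hterm0, hx0⟩ := key (cyc c) Relation.ReflTransGen.refl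
  subst hx0
  refine ⟨cyc (DW.nf c), ⟨hrtg0, hterm0⟩, ?_, ?_, ?_⟩
  · intro y hy
    obtain ⟨y', h1, _, rfl⟩ := key y hy
    exact h1
  · rintro y ⟨hyr, hyterm⟩
    obtain ⟨y', h1, _, rfl⟩ := key y hyr
    exact DW.terminal_rtg_eq hyterm h1
  · -- membership in 𝒜'
    have hqx : ∃ q, IsQuiddity q ∧ cyc (DW.nf c) = cyc q :=
      DW.quiddity_rtg hrtg0 ⟨c, hc, rfl⟩
    obtain ⟨q, hq, hcq⟩ := hqx
    have hqnf : IsQuiddity (DW.nf c) :=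
      (DW.quiddity_dih (DW.cyc_exact hcq)).mpr hq
    have hlennf : 4 ≤ (DW.nf c).length := le_trans hlen4 (DW.nf_length_ge c)
    have h1s : ∀ x ∈ DW.nf c, 1 ≤ x := by
      rcases DW.quiddity_ge1 hqnf with h00 | hge
      · exfalso; rw [h00] at hlennf; simp at hlennf
      · exact hge
    have h11 : DW.IPr DW.no11 (DW.nf c) := by
      rcases DW.quiddity_no11 hqnf with h | h | h
      · exfalso; rw [h] at hlennf; simp at hlennf
      · exfalso; rw [h] at hlennf; simp at hlennf
      · exact h
    obtain ⟨heven, hcount⟩ := DW.alt_count h1s h11 (DW.nf_IPr c)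
    exact ⟨DW.nf c, hqnf, heven, hcount, rfl⟩
end

section
/- Let f ∈ ℕ₀ᵐ be a finite sequence containing at least one entry equal to 1. Then every finite sequence c with ρ(c) = ι(ψ(f)) has length strictly greater than m. -/
def redAux : Bool → List ℕ → List ℕ
  | _, [] => []
  | l, [a] => if a ≤ 1 then [] else [a - (if l then 1 else 0)]
  | l, a :: b :: t =>
      (if a ≤ 1 then [] else [a - (if l then 1 else 0) - (if b = 1 then 1 else 0)])
      ++ redAux (a == 1) (b :: t)

@[simp] lemma redAux_nil (l : Bool) : redAux l [] = [] := rfl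
lemma redAux_single (l : Bool) (a : ℕ) :
    redAux l [a] = if a ≤ 1 then [] else [a - (if l then 1 else 0)] := rfl
lemma redAux_cons_cons (l : Bool) (a b : ℕ) (t : List ℕ) :
    redAux l (a :: b :: t) =
      (if a ≤ 1 then [] else [a - (if l then 1 else 0) - (if b = 1 then 1 else 0)])
      ++ redAux (a == 1) (b :: t) := rfl

lemma redAux_shift (b : ℕ) (v : List ℕ) :
    redAux false ((b + 2) :: v) = redAux true ((b + 3) :: v) := by
  cases v with
  | nil => simp [redAux_single]
  | cons x t =>
      simp only [redAux_cons_cons]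
      have h2 : ¬ b + 2 ≤ 1 := by omega
      have h3 : ¬ b + 3 ≤ 1 := by omega
      have e2 : (b + 2 == 1) = false := by simp
      have e3 : (b + 3 == 1) = false := by simp
      rw [e2, e3]
      simp only [if_neg h2, if_neg h3]
      have hx : (b + 2 - if (false:Bool) = true then 1 else 0) = b + 3 - if True then 1 else 0 := by
        simp
      rw [hx]

lemma redAux_append (u : List ℕ) (a a' : ℕ) (v' w' : List ℕ)
    (hh : (a = 1) = (a' = 1))
    (h : ∀ l, redAux l (a :: v') = redAux l (a' :: w')) (l : Bool) :
    redAux l (u ++ a :: v') = redAux l (u ++ a' :: w') := by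
  induction u generalizing l with
  | nil => exact h l
  | cons x u ih =>
      cases u with
      | nil =>
          simp only [List.cons_append, List.nil_append, redAux_cons_cons]
          simp only [hh]
          rw [h]
      | cons y u' =>
          simp only [List.cons_append, redAux_cons_cons] at *
          congr 1
          exact ih (x == 1)


lemma red_step {c d : List ℕ} (h : rhoStep c d) :
    redAux false c = redAux false d := by
  cases h with
  | mid u v a b =>
      apply redAux_append u (a + 2) (a + 3) _ _ (by simp)
      intro l
      simp only [redAux_cons_cons]
      rw [show ((a+2:ℕ) == 1) = false by simp, show ((a+3:ℕ) == 1) = false by simp,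
        show ((1:ℕ) == 1) = true by simp]
      simp only [if_neg (show ¬ (a+2:ℕ) ≤ 1 by omega), if_neg (show ¬ (a+3:ℕ) ≤ 1 by omega),
        if_pos (le_refl 1), List.nil_append]
      rw [redAux_shift b v]
      congr 2
      · simp [show ¬ (b+2:ℕ) = 1 by omega]
        cases l <;> simp
  | head a t =>
      rw [show ((1:ℕ) :: (a+3) :: t) = (1:ℕ) :: (a+3) :: t from rfl]
      rw [redAux_cons_cons]
      simp only [if_pos (le_refl 1), List.nil_append, show ((1:ℕ) == 1) = true by simp]
      exact redAux_shift a t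
  | last u a =>
      apply redAux_append u (a + 2) (a + 3) _ _ (by simp)
      intro l
      rw [redAux_single, redAux_cons_cons, redAux_single]
      simp only [if_neg (show ¬ (a+2:ℕ) ≤ 1 by omega), if_neg (show ¬ (a+3:ℕ) ≤ 1 by omega),
        if_pos (le_refl 1), show ((1:ℕ) = 1) = True by simp]
      cases l <;> simp

lemma red_target (f : List ℕ) : redAux false (iotaL (psiL f)) = f := by
  induction f with
  | nil => rfl
  | cons a f ih =>
      have hpsi : iotaL (psiL (a :: f)) = 1 :: (a + 2) :: 1 :: psiL f := by
        simp [iotaL, psiL]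
      rw [hpsi]
      rw [redAux_cons_cons]
      simp only [if_pos (le_refl 1), List.nil_append, show ((1:ℕ) == 1) = true by simp]
      rw [redAux_cons_cons]
      simp only [if_neg (show ¬ (a+2:ℕ) ≤ 1 by omega), show ((a+2:ℕ) == 1) = false by simp,
        if_pos rfl, if_pos (show (1:ℕ) = 1 from rfl)]
      have : redAux false (1 :: psiL f) = f := ih
      rw [show ((1:ℕ) :: psiL f) = iotaL (psiL f) from rfl, ih]
      simp

lemma red_len_count (l : Bool) (c : List ℕ) :
    (redAux l c).length + c.count 1 ≤ c.length := by
  induction c generalizing l with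
  | nil => simp
  | cons a t ih =>
      cases t with
      | nil =>
          rw [redAux_single]
          by_cases ha : a ≤ 1
          · simpa [ha] using List.count_le_length (a := 1) (l := [a])
          · have hne : a ≠ 1 := by omega
            simp [ha, List.count_cons, hne]
      | cons b t' =>
          rw [redAux_cons_cons]
          rcases eq_or_ne a 1 with rfl | ha
          · have ih' := ih true
            simp only [show ((1:ℕ) == 1) = true from by simp, if_pos (le_refl 1),
              List.nil_append, List.length_cons] at *
            simp only [List.count_cons] at *
            simp only [beq_iff_eq] at *
            simp
            omega
          · have hflag : (a == 1) = false := by simp [ha]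
            have ih' := ih false
            rw [hflag]
            simp only [List.count_cons, List.length_cons, List.length_append] at *
            simp only [beq_iff_eq] at *
            by_cases h2 : a ≤ 1 <;> simp [h2, ha] <;> omega

lemma red_one_mem (l : Bool) (c : List ℕ) (h : 1 ∈ redAux l c) :
    l = true ∨ 1 ∈ c := by
  induction c generalizing l with
  | nil => simp at h
  | cons a t ih =>
      cases t with
      | nil =>
          rw [redAux_single] at h
          split at h
          · simp at h
          · simp at h
            cases l
            · simp at h; omega
            · exact Or.inl rfl
      | cons b t' =>
          rw [redAux_cons_cons] at h
          rw [List.mem_append] at h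
          rcases h with h | h
          · split at h
            · simp at h
            · simp at h
              rename_i ha
              by_cases hb : b = 1
              · exact Or.inr (by simp [hb])
              · cases l
                · simp [hb] at h; omega
                · exact Or.inl rfl
          · rcases ih _ h with h1 | h1
            · rcases eq_or_ne a 1 with ha | ha
              · exact Or.inr (by simp [ha])
              · simp [ha] at h1
            · exact Or.inr (List.mem_cons_of_mem _ h1)

/-- If the finite sequence `f` contains an entry `1`, then every finite sequence
`c` with `ρ(c) = ι(ψ(f))` is strictly longer than `f`. -/
theorem rho_preimage_long (f : List ℕ) (hf : 1 ∈ f) (c : List ℕ)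
    (hc : RhoEval c (iotaL (psiL f))) : f.length < c.length := by
  have key : ∀ d, Relation.ReflTransGen rhoStep c d → redAux false c = redAux false d := by
    intro d h
    induction h with
    | refl => rfl
    | tail _ hstep ih => rw [ih, red_step hstep]
  have hred := key _ hc.1
  rw [red_target] at hred
  have h1 : (1:ℕ) ∈ redAux false c := by rw [hred]; exact hf
  have h2 := red_one_mem false c h1
  simp at h2
  have h3 : 1 ≤ c.count 1 := List.one_le_count_iff.mpr h2
  have h4 := red_len_count false c
  rw [hred] at h4
  omega
end
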